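/- Let A > 0, A ≠ 1, d ≠ 0, and let ε, δ, K be real constants with ε ≠ 0, −1 + δ²(ln A)⁴ ≠ 0, and Kε/(−1 + δ²(ln A)⁴) > 0. Set D = √(Kε/(−1 + δ²(ln A)⁴)) and define c = −√2·D, a₀ = √2·D·(−1 + δ(ln A)²)/ε, a₁ = −12Kδ(ln A)²√2/(D·(−1 + δ²(ln A)⁴)), a₂ = 12δ√2·D·(ln A)²/ε. Then U(ξ) = a₀ + a₁Q(ξ) + a₂Q(ξ)², with Q(ξ) = 1/(1 + dA^ξ), satisfies −cU + (ε/2)U² + δc·U″ = K at every ξ with 1 + dA^ξ ≠ 0. -/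

import Mathlib

/-- The second explicit Kudryashov solution of the reduced EW equation: with
`D = √(Kε/(-1 + δ²(log A)⁴))`, `c = -√2 D` and the coefficients `a₀, a₁, a₂` as stated,
the function `U ξ = a₀ + a₁ Q ξ + a₂ (Q ξ)²` with `Q ξ = 1/(1 + d A^ξ)` satisfies
`-c U + (ε/2) U² + δ c U'' = K` at every `ξ` with `1 + d A^ξ ≠ 0`. -/
theorem ew_explicit_solution_two (A d ε δ K D c a₀ a₁ a₂ : ℝ)
    (hA : 0 < A) (hA1 : A ≠ 1) (hd : d ≠ 0) (hε : ε ≠ 0)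
    (hden : -1 + δ ^ 2 * (Real.log A) ^ 4 ≠ 0)
    (hpos : 0 < K * ε / (-1 + δ ^ 2 * (Real.log A) ^ 4))
    (hD : D = Real.sqrt (K * ε / (-1 + δ ^ 2 * (Real.log A) ^ 4)))
    (hc : c = -(Real.sqrt 2 * D))
    (ha₀ : a₀ = Real.sqrt 2 * D * (-1 + δ * (Real.log A) ^ 2) / ε)
    (ha₁ : a₁ = -(12 * K * δ * (Real.log A) ^ 2 * Real.sqrt 2
        / (D * (-1 + δ ^ 2 * (Real.log A) ^ 4))))
    (ha₂ : a₂ = 12 * δ * Real.sqrt 2 * D * (Real.log A) ^ 2 / ε)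
    (U : ℝ → ℝ)
    (hUdef : U = fun ξ : ℝ =>
      a₀ + a₁ * (1 / (1 + d * A ^ ξ)) + a₂ * (1 / (1 + d * A ^ ξ)) ^ 2) :
    ∀ ξ : ℝ, 1 + d * A ^ ξ ≠ 0 →
      -c * U ξ + ε / 2 * (U ξ) ^ 2 + δ * c * deriv (deriv U) ξ = K := by
  intro ξ hξ
  set L : ℝ := Real.log A with hL
  -- algebraic facts about the constants
  have hDpos : 0 < D := by rw [hD]; exact Real.sqrt_pos.mpr hpos
  have hDne : D ≠ 0 := ne_of_gt hDpos
  have hD2 : D ^ 2 = K * ε / (-1 + δ ^ 2 * L ^ 4) := by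
    rw [hD]; exact Real.sq_sqrt hpos.le
  have hDden : D ^ 2 * (-1 + δ ^ 2 * L ^ 4) = K * ε := by
    rw [hD2]; field_simp
  have hs2 : Real.sqrt 2 ^ 2 = 2 := Real.sq_sqrt (by norm_num)
  have hP2 : (Real.sqrt 2 * D) ^ 2 * (-1 + δ ^ 2 * L ^ 4) = 2 * K * ε := by
    rw [mul_pow, hs2]; linarith [hDden]
  have ha₁' : a₁ = -a₂ := by
    rw [ha₁, ha₂]
    field_simp
    linear_combination (δ * L ^ 2) * hDden
  -- derivative of the base function
  have hbase : ∀ x : ℝ, HasDerivAt (fun y : ℝ => 1 + d * A ^ y) (d * (A ^ x * L)) x :=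
    fun x => (((Real.hasStrictDerivAt_const_rpow hA x).hasDerivAt).const_mul d).const_add 1
  -- Q and its derivative
  set Q : ℝ → ℝ := fun x => (1 + d * A ^ x)⁻¹ with hQdef
  have hQ : ∀ x : ℝ, 1 + d * A ^ x ≠ 0 →
      HasDerivAt Q (L * ((Q x) ^ 2 - Q x)) x := by
    intro x hx
    have h : HasDerivAt Q (-(d * (A ^ x * L)) / (1 + d * A ^ x) ^ 2) x := (hbase x).inv hx
    convert h using 1
    show L * (((1 + d * A ^ x)⁻¹) ^ 2 - (1 + d * A ^ x)⁻¹) = _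
    field_simp
    ring
  -- first derivative of U
  set V : ℝ → ℝ := fun x => (a₁ + 2 * a₂ * Q x) * (L * ((Q x) ^ 2 - Q x)) with hVdef
  have hU : ∀ x : ℝ, 1 + d * A ^ x ≠ 0 → HasDerivAt U (V x) x := by
    intro x hx
    rw [hUdef]
    have hq := hQ x hx
    have h1 : HasDerivAt (fun y : ℝ => a₀ + a₁ * (1 / (1 + d * A ^ y))
        + a₂ * (1 / (1 + d * A ^ y)) ^ 2)
        (a₁ * (L * ((Q x) ^ 2 - Q x))
          + a₂ * (2 * (Q x) ^ 1 * (L * ((Q x) ^ 2 - Q x)))) x := by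
      simp only [one_div]
      exact ((hq.const_mul a₁).const_add a₀).add ((hq.pow 2).const_mul a₂)
    convert h1 using 1
    simp only [hVdef]
    ring
  -- the set where the denominator is nonzero is open
  have hcont : Continuous fun x : ℝ => 1 + d * A ^ x := by
    have : Continuous fun x : ℝ => A ^ x := by
      simp only [Real.rpow_def_of_pos hA]
      exact Real.continuous_exp.comp (continuous_const.mul continuous_id)
    exact continuous_const.add (continuous_const.mul this)
  have hS : IsOpen {x : ℝ | 1 + d * A ^ x ≠ 0} :=
    isOpen_compl_singleton.preimage hcont
  -- deriv U agrees with V near ξ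
  have hev : deriv U =ᶠ[nhds ξ] V := by
    filter_upwards [hS.mem_nhds hξ] with x hx using (hU x hx).deriv
  have hd2 : deriv (deriv U) ξ = deriv V ξ := hev.deriv_eq
  -- second derivative
  have hq := hQ ξ hξ
  have hV : HasDerivAt V
      ((2 * a₂ * (L * ((Q ξ) ^ 2 - Q ξ))) * (L * ((Q ξ) ^ 2 - Q ξ))
        + (a₁ + 2 * a₂ * Q ξ)
          * (L * ((2 * (Q ξ) ^ 1 * (L * ((Q ξ) ^ 2 - Q ξ))) - L * ((Q ξ) ^ 2 - Q ξ)))) ξ := by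
    exact ((hq.const_mul (2 * a₂)).const_add a₁).mul
      (((hq.pow 2).sub hq).const_mul L)
  rw [hd2, hV.deriv]
  -- final algebraic verification
  rw [hUdef]
  simp only [one_div]
  set q : ℝ := (1 + d * A ^ ξ)⁻¹ with hqdef
  rw [hc, ha₀, ha₁', ha₂]
  have key : ∀ q : ℝ,
      -(-(Real.sqrt 2 * D)) * (Real.sqrt 2 * D * (-1 + δ * L ^ 2) / ε
          + -(12 * δ * Real.sqrt 2 * D * L ^ 2 / ε) * q
          + 12 * δ * Real.sqrt 2 * D * L ^ 2 / ε * q ^ 2)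
        + ε / 2 * (Real.sqrt 2 * D * (-1 + δ * L ^ 2) / ε
          + -(12 * δ * Real.sqrt 2 * D * L ^ 2 / ε) * q
          + 12 * δ * Real.sqrt 2 * D * L ^ 2 / ε * q ^ 2) ^ 2
        + δ * -(Real.sqrt 2 * D) *
          ((2 * (12 * δ * Real.sqrt 2 * D * L ^ 2 / ε) * (L * (q ^ 2 - q))) * (L * (q ^ 2 - q))
            + (-(12 * δ * Real.sqrt 2 * D * L ^ 2 / ε)
                + 2 * (12 * δ * Real.sqrt 2 * D * L ^ 2 / ε) * q)
              * (L * ((2 * q ^ 1 * (L * (q ^ 2 - q))) - L * (q ^ 2 - q)))) = K := by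
    intro q
    field_simp
    linear_combination hP2
  exact key q
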